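/- Let R̃ ∈ SO(3) and let M ∈ ℝ³ˣ³ be symmetric positive definite. Then ‖R̃M‖_I = (1/4)Tr((I₃ − R̃)M) = 0 if and only if R̃ = I₃. -/

import Mathlib

open Matrix

noncomputable section

/-- `SO(3)`: real 3×3 matrices with `RᵀR = RRᵀ = I` and `det R = 1`. -/
def so3 (R : Matrix (Fin 3) (Fin 3) ℝ) : Prop :=
  Rᵀ * R = 1 ∧ R * Rᵀ = 1 ∧ R.det = 1

/-- The skew-symmetric matrix `[y]ₓ` with `[y]ₓ x = y × x`. -/
def skew (y : Fin 3 → ℝ) : Matrix (Fin 3) (Fin 3) ℝ :=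
  !![0, -y 2, y 1; y 2, 0, -y 0; -y 1, y 0, 0]

/-- `vex`, the inverse of `[·]ₓ` on skew-symmetric matrices. -/
def vex (A : Matrix (Fin 3) (Fin 3) ℝ) : Fin 3 → ℝ :=
  ![A 2 1, A 0 2, A 1 0]

/-- Anti-symmetric projection `P_a(A) = (A - Aᵀ)/2`. -/
def Pa (A : Matrix (Fin 3) (Fin 3) ℝ) : Matrix (Fin 3) (Fin 3) ℝ :=
  (1 / 2 : ℝ) • (A - Aᵀ)

/-- Normalized Euclidean distance `‖A‖_I = (1/4) Tr(I - A)`. -/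
def normI (A : Matrix (Fin 3) (Fin 3) ℝ) : ℝ :=
  (1 / 4 : ℝ) * Matrix.trace (1 - A)

/-- Euclidean norm on ℝ³. -/
def euclNorm (v : Fin 3 → ℝ) : ℝ := Real.sqrt (∑ i, v i ^ 2)

/-- Homogeneous transformation matrix `T = [R P; 0 1]`. -/
def homT (R : Matrix (Fin 3) (Fin 3) ℝ) (P : Fin 3 → ℝ) :
    Matrix (Fin 3 ⊕ Fin 1) (Fin 3 ⊕ Fin 1) ℝ :=
  Matrix.fromBlocks R (Matrix.of fun i (_ : Fin 1) => P i) 0 1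

/-- `SE(3)`: 4×4 matrices `[R P; 0 1]` with `R ∈ SO(3)`, `P ∈ ℝ³`. -/
def SE3 (T : Matrix (Fin 3 ⊕ Fin 1) (Fin 3 ⊕ Fin 1) ℝ) : Prop :=
  ∃ R P, so3 R ∧ T = homT R P

/-- Wedge map `[U]∧ = [[Ω]ₓ V; 0 0]` for `U = (Ω, V) ∈ ℝ⁶`. -/
def wedge (Ω V : Fin 3 → ℝ) : Matrix (Fin 3 ⊕ Fin 1) (Fin 3 ⊕ Fin 1) ℝ :=
  Matrix.fromBlocks (skew Ω) (Matrix.of fun i (_ : Fin 1) => V i) 0 0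

/-- Wedge map on `ℝ⁶` represented as `Fin 3 ⊕ Fin 3 → ℝ`. -/
def wedgeS (u : Fin 3 ⊕ Fin 3 → ℝ) : Matrix (Fin 3 ⊕ Fin 1) (Fin 3 ⊕ Fin 1) ℝ :=
  wedge (u ∘ Sum.inl) (u ∘ Sum.inr)

/-- Augmented adjoint `Ad̄_T = [R 0; [P]ₓR R]` of `T = [R P; 0 1]`. -/
def adBar (R : Matrix (Fin 3) (Fin 3) ℝ) (P : Fin 3 → ℝ) :
    Matrix (Fin 3 ⊕ Fin 3) (Fin 3 ⊕ Fin 3) ℝ :=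
  Matrix.fromBlocks R 0 (skew P * R) R

/-- `Ad̄_{T⁻¹} = [Rᵀ 0; -Rᵀ[P]ₓ Rᵀ]` for `T = [R P; 0 1]`. -/
def adBarInv (R : Matrix (Fin 3) (Fin 3) ℝ) (P : Fin 3 → ℝ) :
    Matrix (Fin 3 ⊕ Fin 3) (Fin 3 ⊕ Fin 3) ℝ :=
  Matrix.fromBlocks Rᵀ 0 (-(Rᵀ * skew P)) Rᵀ

/-- Rotation block of a 4×4 homogeneous matrix. -/
def rotOf (T : Matrix (Fin 3 ⊕ Fin 1) (Fin 3 ⊕ Fin 1) ℝ) : Matrix (Fin 3) (Fin 3) ℝ :=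
  Matrix.of fun i j => T (Sum.inl i) (Sum.inl j)

/-- Position block of a 4×4 homogeneous matrix. -/
def posOf (T : Matrix (Fin 3 ⊕ Fin 1) (Fin 3 ⊕ Fin 1) ℝ) : Fin 3 → ℝ :=
  fun i => T (Sum.inl i) (Sum.inr 0)

/-- Augmented adjoint of a 4×4 homogeneous matrix. -/
def adBarT (T : Matrix (Fin 3 ⊕ Fin 1) (Fin 3 ⊕ Fin 1) ℝ) :
    Matrix (Fin 3 ⊕ Fin 3) (Fin 3 ⊕ Fin 3) ℝ :=
  adBar (rotOf T) (posOf T)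

/-- Homogeneous coordinates `(v, 1) ∈ ℝ⁴` of `v ∈ ℝ³`. -/
def hvec (v : Fin 3 → ℝ) : Fin 3 ⊕ Fin 1 → ℝ := Sum.elim v 1

/-- for `R̃ ∈ SO(3)` and `M` symmetric positive definite,
`‖R̃M‖_I = (1/4)Tr((I − R̃)M) = 0` iff `R̃ = I`. -/
theorem stmt11 (Rt M : Matrix (Fin 3) (Fin 3) ℝ) (hRt : so3 Rt) (hM : M.PosDef) :
    ((1 / 4 : ℝ) * Matrix.trace ((1 - Rt) * M) = 0 ↔ Rt = 1) := by
  unfold so3 at hRt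
  obtain ⟨hRtT, hRRT, _⟩ := hRt
  constructor
  · intro h
    set B := 1 - Rt with hB
    have hMsym : Mᵀ = M := hM.1
    have h1 : B * Bᵀ = B + Bᵀ := by
      simp only [hB, Matrix.sub_mul, Matrix.mul_sub, transpose_sub, transpose_one, hRRT,
        Matrix.one_mul, Matrix.mul_one]
      abel
    have h2 : trace (Bᵀ * M) = trace (B * M) := by
      rw [← trace_transpose (Bᵀ * M), transpose_mul, transpose_transpose, hMsym, trace_mul_comm]
    have h3 : trace (Bᵀ * M * B) = 2 * trace (B * M) := by
      rw [trace_mul_cycle, h1, Matrix.add_mul, trace_add, h2]; ring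
    have h0 : trace (B * M) = 0 := by
      have : (1 / 4 : ℝ) ≠ 0 := by norm_num
      exact (mul_eq_zero.mp h).resolve_left this
    have h4 : trace (Bᵀ * M * B) = 0 := by rw [h3, h0]; ring
    have hdiag : ∀ j, (Bᵀ * M * B) j j = (fun i => B i j) ⬝ᵥ M *ᵥ (fun i => B i j) := by
      intro j
      simp only [Matrix.mul_apply, dotProduct, mulVec, transpose_apply, Finset.sum_mul,
        Finset.mul_sum]
      rw [Finset.sum_comm]
      apply Finset.sum_congr rfl
      intro i _
      apply Finset.sum_congr rfl
      intro k _
      ring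
    have hnn : ∀ j ∈ Finset.univ, 0 ≤ (Bᵀ * M * B) j j := by
      intro j _
      rw [hdiag]
      have := hM.posSemidef.dotProduct_mulVec_nonneg (fun i => B i j)
      simpa using this
    have hsum : ∑ j, (Bᵀ * M * B) j j = 0 := h4
    have hz := (Finset.sum_eq_zero_iff_of_nonneg hnn).mp hsum
    have hcol : ∀ j, (fun i => B i j) = 0 := by
      intro j
      by_contra hc
      have := hM.dotProduct_mulVec_pos (x := fun i => B i j) hc
      rw [show star (fun i => B i j) = (fun i => B i j) from star_trivial _] at this
      have hzj := hz j (Finset.mem_univ j)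
      rw [hdiag] at hzj
      linarith
    ext i j
    have := congrFun (hcol j) i
    simp only [hB, Matrix.sub_apply, Pi.zero_apply] at this
    linarith [this]
  · intro h
    simp [h]
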